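/- Let D be an invertible n×n real matrix with nonnegative off-diagonal entries, let d := −D·𝟙 have nonnegative entries, let π be a probability row vector, and let φ be a strictly positive row vector with φ·𝟙 = 1 and φ·(D + d·π) = 0. Define ψ := π·(−D)^{−1}·diag(d) and the n×n matrix D' by D'(i,j) := D(j,i)·φ(j)/φ(i). Then for all t ≥ 0, ψ · exp(tD') · 𝟙 = π · exp(tD) · 𝟙; in particular the time-reversed pair (ψ, D') represents the same phase-type distribution as (π, D). -/

import Mathlib

open Matrix

/-- `(π, D)` represents the unit exponential distribution:
`π · exp(tD) · 𝟙 = e^{-t}` for all `t ≥ 0`. -/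
def ReprUnitExp {n : ℕ} (π : Fin n → ℝ) (D : Matrix (Fin n) (Fin n) ℝ) : Prop :=
  ∀ t : ℝ, 0 ≤ t → (π ᵥ* NormedSpace.exp (t • D)) ⬝ᵥ (fun _ => 1) = Real.exp (-t)

theorem stmt5 {n : ℕ} (D : Matrix (Fin n) (Fin n) ℝ) (hDinv : IsUnit D.det)
    (hoff : ∀ i j, i ≠ j → 0 ≤ D i j)
    (d : Fin n → ℝ) (hd : d = (-D) *ᵥ (fun _ => 1)) (hdnn : ∀ i, 0 ≤ d i)
    (π : Fin n → ℝ) (hπnn : ∀ i, 0 ≤ π i) (hπsum : ∑ i, π i = 1)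
    (φ : Fin n → ℝ) (hφpos : ∀ i, 0 < φ i) (hφsum : ∑ i, φ i = 1)
    (hφ : φ ᵥ* (D + Matrix.vecMulVec d π) = 0)
    (ψ : Fin n → ℝ) (hψ : ψ = π ᵥ* ((-D)⁻¹ * Matrix.diagonal d))
    (D' : Matrix (Fin n) (Fin n) ℝ) (hD' : ∀ i j, D' i j = D j i * φ j / φ i) :
    ∀ t : ℝ, 0 ≤ t →
      (ψ ᵥ* NormedSpace.exp (t • D')) ⬝ᵥ (fun _ => 1)
        = (π ᵥ* NormedSpace.exp (t • D)) ⬝ᵥ (fun _ => 1) := by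
  intro t ht
  have hNdet : IsUnit (-D).det := by
    rw [Matrix.det_neg]
    exact ((isUnit_one.neg).pow _).mul hDinv
  -- the constant c
  set c : ℝ := φ ⬝ᵥ d with hc
  -- φ ᵥ* D = -(c • π)
  have hφD : φ ᵥ* D = -(c • π) := by
    have h1 : φ ᵥ* Matrix.vecMulVec d π = c • π := by
      funext j
      simp only [Matrix.vecMul, Matrix.vecMulVec_apply, dotProduct, Pi.smul_apply,
        smul_eq_mul, hc]
      rw [Finset.sum_mul]
      exact Finset.sum_congr rfl fun i _ => by ring
    have h2 := hφ
    rw [Matrix.vecMul_add, h1] at h2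
    exact eq_neg_of_add_eq_zero_left h2
  have hφN : φ ᵥ* (-D) = c • π := by
    rw [Matrix.vecMul_neg, hφD, neg_neg]
  -- c ≠ 0
  have hcne : c ≠ 0 := by
    intro h0
    have : φ = 0 := by
      have := congrArg (fun x => x ᵥ* (-D)⁻¹) hφN
      simp only [h0, zero_smul, Matrix.zero_vecMul, Matrix.vecMul_vecMul] at this
      rwa [Matrix.mul_nonsing_inv _ hNdet, Matrix.vecMul_one] at this
    rw [this] at hφsum
    simp at hφsum
  -- φ = c • (π ᵥ* (-D)⁻¹)
  have hφeq : φ = c • (π ᵥ* (-D)⁻¹) := by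
    have := congrArg (fun x => x ᵥ* (-D)⁻¹) hφN
    simp only [Matrix.vecMul_vecMul, Matrix.smul_vecMul] at this
    rwa [Matrix.mul_nonsing_inv _ hNdet, Matrix.vecMul_one] at this
  -- ψ i = φ i / c * d i
  have hψ' : ∀ i, ψ i = φ i / c * d i := by
    intro i
    have h1 : ψ i = (π ᵥ* (-D)⁻¹) i * d i := by
      rw [hψ, ← Matrix.vecMul_vecMul, Matrix.vecMul_diagonal]
    have h2 : φ i = c * (π ᵥ* (-D)⁻¹) i := by
      rw [hφeq]; simp
    rw [h1, h2, mul_comm c, mul_div_assoc, div_self hcne, mul_one]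
  -- diagonal matrix Φ and its inverse
  set Φ : Matrix (Fin n) (Fin n) ℝ := Matrix.diagonal φ with hΦ
  have hΦmul : Φ * Matrix.diagonal (fun i => (φ i)⁻¹) = 1 := by
    have h1 : (fun i => φ i * (φ i)⁻¹) = fun _ => (1 : ℝ) :=
      funext fun i => mul_inv_cancel₀ (hφpos i).ne'
    rw [hΦ, Matrix.diagonal_mul_diagonal, h1, Matrix.diagonal_one]
  have hΦinv : Φ⁻¹ = Matrix.diagonal (fun i => (φ i)⁻¹) :=
    Matrix.inv_eq_right_inv hΦmul
  have hΦunit : IsUnit Φ := by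
    rw [Matrix.isUnit_iff_isUnit_det, hΦ, Matrix.det_diagonal]
    exact (Finset.prod_pos fun i _ => hφpos i).ne'.isUnit
  -- conjugation identity
  have hconj : t • D' = Φ⁻¹ * (t • D)ᵀ * Φ := by
    funext i j
    rw [hΦinv]
    simp [hΦ, Matrix.mul_apply, Matrix.diagonal, Finset.sum_ite_eq, Finset.sum_ite_eq',
      hD' i j, Matrix.transpose_apply, ite_mul, mul_ite, div_eq_mul_inv]
    ring
  set E := NormedSpace.exp (t • D) with hE
  have hexpD' : NormedSpace.exp (t • D') = Φ⁻¹ * Eᵀ * Φ := by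
    rw [hconj, Matrix.exp_conj' Φ _ hΦunit, Matrix.exp_transpose]
  -- E commutes with D
  have hDE : D * E = E * D := by
    have h1 : D * (t • D) * D⁻¹ = t • D := by
      rw [Matrix.mul_smul, Matrix.smul_mul, Matrix.mul_nonsing_inv_cancel_right _ _ hDinv]
    have h2 : E = D * E * D⁻¹ := by
      conv_lhs => rw [hE, ← h1, Matrix.exp_conj D _ ((Matrix.isUnit_iff_isUnit_det D).mpr hDinv)]
    calc D * E = D * E * D⁻¹ * D := by
          rw [Matrix.nonsing_inv_mul_cancel_right _ _ hDinv]
      _ = E * D := by rw [← h2]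
  have hcomm : (-D)⁻¹ * E = E * (-D)⁻¹ := by
    have hne : (-D) * E = E * (-D) := by
      simp [Matrix.neg_mul, Matrix.mul_neg, hDE]
    calc (-D)⁻¹ * E = (-D)⁻¹ * (E * (-D)) * (-D)⁻¹ := by
          rw [← Matrix.mul_assoc, Matrix.mul_nonsing_inv_cancel_right _ _ hNdet]
      _ = (-D)⁻¹ * ((-D) * E) * (-D)⁻¹ := by rw [hne]
      _ = E * (-D)⁻¹ := by
          rw [← Matrix.mul_assoc, Matrix.nonsing_inv_mul _ hNdet, Matrix.one_mul]
  -- main computation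
  have hψΦ : ψ ᵥ* Φ⁻¹ = c⁻¹ • d := by
    funext i
    rw [hΦinv, Matrix.vecMul_diagonal, hψ' i]
    simp only [Pi.smul_apply, smul_eq_mul]
    rw [div_eq_mul_inv]
    have h1 : φ i * c⁻¹ * d i * (φ i)⁻¹ = c⁻¹ * d i * (φ i * (φ i)⁻¹) := by ring
    rw [h1, mul_inv_cancel₀ (hφpos i).ne', mul_one]
  have hduni : (-D)⁻¹ *ᵥ d = fun _ => 1 := by
    rw [hd, Matrix.mulVec_mulVec, Matrix.nonsing_inv_mul _ hNdet, Matrix.one_mulVec]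
  calc (ψ ᵥ* NormedSpace.exp (t • D')) ⬝ᵥ (fun _ => 1)
      = (((ψ ᵥ* Φ⁻¹) ᵥ* Eᵀ) ᵥ* Φ) ⬝ᵥ (fun _ => 1) := by
        rw [hexpD', ← Matrix.vecMul_vecMul, ← Matrix.vecMul_vecMul]
    _ = φ ⬝ᵥ (E *ᵥ (c⁻¹ • d)) := by
        rw [hψΦ, Matrix.vecMul_transpose]
        simp [hΦ, Matrix.vecMul_diagonal, dotProduct, mul_comm]
    _ = (φ ᵥ* E) ⬝ᵥ (c⁻¹ • d) := (Matrix.dotProduct_mulVec _ _ _)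
    _ = (c • ((π ᵥ* (-D)⁻¹) ᵥ* E)) ⬝ᵥ (c⁻¹ • d) := by
        rw [hφeq, Matrix.smul_vecMul]
    _ = ((π ᵥ* (-D)⁻¹) ᵥ* E) ⬝ᵥ d := by
        rw [smul_dotProduct, dotProduct_smul, smul_smul,
          mul_inv_cancel₀ hcne, one_smul]
    _ = (π ᵥ* ((-D)⁻¹ * E)) ⬝ᵥ d := by rw [Matrix.vecMul_vecMul]
    _ = ((π ᵥ* E) ᵥ* (-D)⁻¹) ⬝ᵥ d := by rw [hcomm, ← Matrix.vecMul_vecMul]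
    _ = (π ᵥ* E) ⬝ᵥ ((-D)⁻¹ *ᵥ d) := by rw [← Matrix.dotProduct_mulVec]
    _ = (π ᵥ* E) ⬝ᵥ (fun _ => 1) := by rw [hduni]
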